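/- Let G be a finite connected simple graph with rad(G) ∈ {2,3} and dmg(G) ≠ 1. Then dmg(G) = 2 if and only if there exist vertices z, y ∈ V(G) and s_y ∈ N[z] such that: (1) dist(z,y) ∈ {2,3}; (2) no vertex in N[z] dominates y; (3) for every x ∈ N(y) \ N[s_y] there exist s_x ∈ N[s_y] and v ∈ N[s_x] such that N(x) \ {y} ⊆ N[s_x] and N(y) \ {x} ⊆ N[v]; and, in addition, for every vertex w ∈ V(G) \ {y} with dist(z,w) ∈ {2,3}, either conditions (2) and (3) hold with w in place of y (for some choice of s_w ∈ N[z]), or some vertex of N[z] dominates w. -/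

import Mathlib

open SimpleGraph

/-!
Formalization of the game of Cops and Robber (one cop, one robber) and the damage number.

Round 0: the cop chooses a starting vertex, then the robber chooses a starting vertex.
In each subsequent round the cop moves to an adjacent vertex or passes, after which the
robber moves to an adjacent vertex or passes.  Strategies are modelled as functions of
the full history of positions (most recent first).
-/

/-- A cop strategy: an initial vertex together with a move function taking the history of
cop positions (most recent first, nonempty) and of robber positions (most recent first)
to the cop's next position. -/
structure CopStrategy (V : Type*) where
  init : V
  move : List V → List V → V

/-- A robber strategy: an initial vertex chosen in response to the cop's initial vertex,
together with a move function taking the history of cop positions (most recent first,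
including the cop's move from the current round) and of robber positions (most recent
first) to the robber's next position. -/
structure RobberStrategy (V : Type*) where
  init : V → V
  move : List V → List V → V

variable {V : Type*}

/-- A cop move function is legal for `G` if from any position it either passes or
moves along an edge of `G`. -/
def LegalCopMove (G : SimpleGraph V) (cs : List V → List V → V) : Prop :=
  ∀ (c : V) (ch rh : List V), cs (c :: ch) rh = c ∨ G.Adj c (cs (c :: ch) rh)

/-- A robber move function is legal for `G` if from any position it either passes or
moves along an edge of `G`. -/
def LegalRobMove (G : SimpleGraph V) (rs : List V → List V → V) : Prop :=
  ∀ (r : V) (ch rh : List V), rs ch (r :: rh) = r ∨ G.Adj r (rs ch (r :: rh))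

/-- A legal cop strategy: every move passes or goes along an edge. -/
def CopStrategy.Legal (G : SimpleGraph V) (CS : CopStrategy V) : Prop :=
  LegalCopMove G CS.move

/-- A legal robber strategy: every move passes or goes along an edge. -/
def RobberStrategy.Legal (G : SimpleGraph V) (RS : RobberStrategy V) : Prop :=
  LegalRobMove G RS.move

/-- `play CS RS n = (cₙ, rₙ, earlier cop positions, earlier robber positions)`:
the state of the game after round `n`, when the cop plays `CS` and the robber plays `RS`.
In each round the cop moves first, then the robber moves. -/
def play (CS : CopStrategy V) (RS : RobberStrategy V) : ℕ → V × V × List V × List V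
  | 0 => (CS.init, RS.init CS.init, [], [])
  | n + 1 =>
    let p := play CS RS n
    let c := CS.move (p.1 :: p.2.2.1) (p.2.1 :: p.2.2.2)
    let r := RS.move (c :: p.1 :: p.2.2.1) (p.2.1 :: p.2.2.2)
    (c, r, p.1 :: p.2.2.1, p.2.1 :: p.2.2.2)

/-- The cop's position after its move in round `n`. -/
def copPos (CS : CopStrategy V) (RS : RobberStrategy V) (n : ℕ) : V := (play CS RS n).1

/-- The robber's position after its move in round `n`. -/
def robPos (CS : CopStrategy V) (RS : RobberStrategy V) (n : ℕ) : V := (play CS RS n).2.1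

/-- The robber damages `v`: at the end of some round `n` the robber occupies `v`, having
never been captured up to that point (neither by moving onto the cop, nor by the cop's
move in any round up to and including round `n + 1`); it then passes or moves in
round `n + 1`, damaging `v`. -/
def Damages (CS : CopStrategy V) (RS : RobberStrategy V) (v : V) : Prop :=
  ∃ n, robPos CS RS n = v ∧
    ∀ k ≤ n, copPos CS RS k ≠ robPos CS RS k ∧ copPos CS RS (k + 1) ≠ robPos CS RS k

/-- The set of vertices damaged by the robber during the play of `CS` against `RS`. -/
def damageSet (CS : CopStrategy V) (RS : RobberStrategy V) : Set V :=
  {v | Damages CS RS v}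

/-- The damage number of `G`: the minimum over legal cop strategies of the maximum over
legal robber strategies of the number of distinct damaged vertices. -/
noncomputable def dmg (G : SimpleGraph V) : ℕ :=
  sInf { n | ∃ CS : CopStrategy V, CS.Legal G ∧
    ∀ RS : RobberStrategy V, RS.Legal G → (damageSet CS RS).ncard ≤ n }

/-- A cop strategy passes during the first round. -/
def CopStrategy.PassesFirst (CS : CopStrategy V) : Prop :=
  ∀ r : V, CS.move [CS.init] [r] = CS.init

/-- The damage number of `G` when the cop is required to pass during the first round. -/
noncomputable def dmg' (G : SimpleGraph V) : ℕ :=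
  sInf { n | ∃ CS : CopStrategy V, CS.Legal G ∧ CS.PassesFirst ∧
    ∀ RS : RobberStrategy V, RS.Legal G → (damageSet CS RS).ncard ≤ n }

/-- The eccentricity of a vertex: the maximum distance from `u` to any vertex. -/
noncomputable def ecc (G : SimpleGraph V) (u : V) : ℕ := sSup (Set.range (G.dist u))

/-- The radius of a graph: the minimum eccentricity over all vertices. -/
noncomputable def gRadius (G : SimpleGraph V) : ℕ := sInf (Set.range (ecc G))

/-- The closed neighbourhood `N[v]` of a vertex, as a set. -/
def cN (G : SimpleGraph V) (v : V) : Set V := insert v (G.neighborSet v)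

/-- `v` dominates `u` if `N(u) ⊆ N[v]`. -/
def Dominates (G : SimpleGraph V) (v u : V) : Prop :=
  G.neighborSet u ⊆ cN G v

/-- Condition (3) of the damage-number-two characterization, for a robber start `y` and a
first cop move `s_y`: for every `x ∈ N(y) \ N[s_y]` there exist `s_x ∈ N[s_y]` and
`v ∈ N[s_x]` with `N(x) \ {y} ⊆ N[s_x]` and `N(y) \ {x} ⊆ N[v]`. -/
def Cond3 (G : SimpleGraph V) (y sy : V) : Prop :=
  ∀ x ∈ G.neighborSet y \ cN G sy, ∃ sx ∈ cN G sy, ∃ v ∈ cN G sx,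
    G.neighborSet x \ {y} ⊆ cN G sx ∧ G.neighborSet y \ {x} ⊆ cN G v

section DamageAux

/-! ## infrastructure -/

section Infra

variable (CS : CopStrategy V) (RS : RobberStrategy V)

def cHist (n : ℕ) : List V := (List.range n).reverse.map (copPos CS RS)
def rHist (n : ℕ) : List V := (List.range n).reverse.map (robPos CS RS)

lemma cHist_succ (n : ℕ) : cHist CS RS (n + 1) = copPos CS RS n :: cHist CS RS n := by
  simp [cHist, List.range_succ]

lemma rHist_succ (n : ℕ) : rHist CS RS (n + 1) = robPos CS RS n :: rHist CS RS n := by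
  simp [rHist, List.range_succ]

lemma play_hist (n : ℕ) :
    (play CS RS n).2.2.1 = cHist CS RS n ∧ (play CS RS n).2.2.2 = rHist CS RS n := by
  induction n with
  | zero => simp [play, cHist, rHist]
  | succ n ih =>
    have h1 : (play CS RS (n+1)).2.2.1 = (play CS RS n).1 :: (play CS RS n).2.2.1 := rfl
    have h2 : (play CS RS (n+1)).2.2.2 = (play CS RS n).2.1 :: (play CS RS n).2.2.2 := rfl
    rw [h1, h2, ih.1, ih.2, cHist_succ, rHist_succ]
    exact ⟨rfl, rfl⟩

lemma copPos_zero : copPos CS RS 0 = CS.init := rfl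
lemma robPos_zero : robPos CS RS 0 = RS.init CS.init := rfl

lemma copPos_succ (n : ℕ) :
    copPos CS RS (n + 1) = CS.move (copPos CS RS n :: cHist CS RS n) (robPos CS RS n :: rHist CS RS n) := by
  have h1 : copPos CS RS (n+1) = CS.move ((play CS RS n).1 :: (play CS RS n).2.2.1)
      ((play CS RS n).2.1 :: (play CS RS n).2.2.2) := rfl
  rw [h1, (play_hist CS RS n).1, (play_hist CS RS n).2]
  rfl

lemma robPos_succ (n : ℕ) :
    robPos CS RS (n + 1) = RS.move (copPos CS RS (n+1) :: copPos CS RS n :: cHist CS RS n)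
      (robPos CS RS n :: rHist CS RS n) := by
  have h1 : robPos CS RS (n+1) = RS.move ((play CS RS (n+1)).1 :: (play CS RS n).1 :: (play CS RS n).2.2.1)
      ((play CS RS n).2.1 :: (play CS RS n).2.2.2) := rfl
  rw [h1, (play_hist CS RS n).1, (play_hist CS RS n).2]
  rfl

lemma robPos_legal {G : SimpleGraph V} (hRS : RS.Legal G) (n : ℕ) :
    robPos CS RS (n+1) = robPos CS RS n ∨ G.Adj (robPos CS RS n) (robPos CS RS (n+1)) := by
  rw [robPos_succ]
  exact hRS (robPos CS RS n) _ _

lemma copPos_legal {G : SimpleGraph V} (hCS : CS.Legal G) (n : ℕ) :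
    copPos CS RS (n+1) = copPos CS RS n ∨ G.Adj (copPos CS RS n) (copPos CS RS (n+1)) := by
  rw [copPos_succ]
  exact hCS (copPos CS RS n) _ _

lemma rHist_getLast? (n : ℕ) : (rHist CS RS (n+1)).getLast? = some (robPos CS RS 0) := by
  have : rHist CS RS (n+1) = ((List.range (n+1)).map (robPos CS RS)).reverse := by
    simp [rHist]
  rw [this, List.getLast?_reverse]
  rw [List.range_succ_eq_map]
  simp

lemma rHist_length (n : ℕ) : (rHist CS RS n).length = n := by simp [rHist]
lemma cHist_length (n : ℕ) : (cHist CS RS n).length = n := by simp [cHist]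

end Infra

/-! ## guarded moves and the cop strategy -/

attribute [local instance] Classical.propDecidable

lemma mem_cN (G : SimpleGraph V) {a v : V} : a ∈ cN G v ↔ a = v ∨ G.Adj v a := by
  simp [cN, SimpleGraph.mem_neighborSet]

noncomputable def grd (G : SimpleGraph V) (c t : V) : V :=
  if t = c ∨ G.Adj c t then t else c

lemma grd_legal (G : SimpleGraph V) (c t : V) : grd G c t = c ∨ G.Adj c (grd G c t) := by
  unfold grd
  split
  · next h => exact h
  · exact Or.inl rfl

lemma grd_eq (G : SimpleGraph V) {c t : V} (h : t = c ∨ G.Adj c t) : grd G c t = t :=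
  if_pos h

lemma grd_eq' (G : SimpleGraph V) {c t : V} (h : t ∈ cN G c) : grd G c t = t :=
  grd_eq G ((mem_cN G).1 h)

noncomputable def copMoveFn (G : SimpleGraph V) (z : V) (T : V → V) (SX VV : V → V → V) :
    List V → List V → V := fun ch rh =>
  if rh.head?.getD z = ch.head?.getD z ∨ G.Adj (ch.head?.getD z) (rh.head?.getD z) then
    rh.head?.getD z
  else if ch.length = 1 then grd G (ch.head?.getD z) (T (rh.getLast?.getD z))
  else if rh.head?.getD z = rh.getLast?.getD z then
    (if rh.tail.head?.getD z = rh.getLast?.getD z then ch.head?.getD z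
     else grd G (ch.head?.getD z) (VV (rh.getLast?.getD z) (rh.tail.head?.getD z)))
  else grd G (ch.head?.getD z) (SX (rh.getLast?.getD z) (rh.head?.getD z))

lemma copMoveFn_legal (G : SimpleGraph V) (z : V) (T : V → V) (SX VV : V → V → V) :
    LegalCopMove G (copMoveFn G z T SX VV) := by
  intro c ch rh
  unfold copMoveFn
  split
  · next h => exact h
  split
  · exact grd_legal G c _
  split
  · split
    · exact Or.inl rfl
    · exact grd_legal G c _
  · exact grd_legal G c _

/-- The cop strategy built from the characterization data. -/
noncomputable def copStrat (G : SimpleGraph V) (z : V) (T : V → V) (SX VV : V → V → V) :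
    CopStrategy V := ⟨z, copMoveFn G z T SX VV⟩

lemma copStrat_legal (G : SimpleGraph V) (z : V) (T : V → V) (SX VV : V → V → V) :
    (copStrat G z T SX VV).Legal G := copMoveFn_legal G z T SX VV

section CopStratLemmas

variable (G : SimpleGraph V) (z : V) (T : V → V) (SX VV : V → V → V) (RS : RobberStrategy V)

local notation "CSz" => copStrat G z T SX VV
local notation "cp" => copPos CSz RS
local notation "rp" => robPos CSz RS

lemma copStrat_pos_zero : cp 0 = z := rfl

lemma copStrat_move_one :
    cp 1 = if rp 0 = z ∨ G.Adj z (rp 0) then rp 0 else grd G z (T (rp 0)) := by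
  rw [copPos_succ]
  show copMoveFn G z T SX VV (cp 0 :: cHist CSz RS 0) (rp 0 :: rHist CSz RS 0) = _
  unfold copMoveFn
  simp [cHist, rHist, copStrat_pos_zero]

lemma copStrat_move_succ (n : ℕ) (hn : 1 ≤ n) :
    cp (n+1) = if rp n = cp n ∨ G.Adj (cp n) (rp n) then rp n
      else if rp n = rp 0 then
        (if rp (n-1) = rp 0 then cp n else grd G (cp n) (VV (rp 0) (rp (n-1))))
      else grd G (cp n) (SX (rp 0) (rp n)) := by
  obtain ⟨m, rfl⟩ : ∃ m, n = m + 1 := ⟨n - 1, (Nat.succ_pred_eq_of_pos hn).symm⟩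
  rw [copPos_succ]
  show copMoveFn G z T SX VV (cp (m+1) :: cHist CSz RS (m+1)) (rp (m+1) :: rHist CSz RS (m+1)) = _
  have hlast : (rp (m+1) :: rHist CSz RS (m+1)).getLast? = some (rp 0) := by
    rw [← rHist_succ]; exact rHist_getLast? CSz RS (m+1)
  have htail : (rp (m+1) :: rHist CSz RS (m+1)).tail.head?.getD z = rp m := by
    rw [rHist_succ]; rfl
  have hlen : (cp (m+1) :: cHist CSz RS (m+1)).length = m + 2 := by
    simp [cHist_length]
  unfold copMoveFn
  rw [hlast]
  simp only [List.head?_cons, Option.getD_some, hlen, htail]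
  norm_num
  rfl

end CopStratLemmas

/-! ## invariants for the cop strategy -/

section Invariants

variable {G : SimpleGraph V} {z : V} {T : V → V} {SX VV : V → V → V} {RS : RobberStrategy V}

local notation "CSz" => copStrat G z T SX VV
local notation "cp" => copPos CSz RS
local notation "rp" => robPos CSz RS

/-- Lemma A : if the robber starts in the closed neighbourhood of `z`, no damage at all. -/
lemma damage_empty_of_start_close (hr0 : rp 0 ∈ cN G z) :
    damageSet CSz RS = ∅ := by
  ext v
  simp only [damageSet, Set.mem_setOf_eq, Set.mem_empty_iff_false, iff_false]
  rintro ⟨n, hv, hcl⟩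
  have h0 := hcl 0 (Nat.zero_le n)
  rcases (mem_cN G).1 hr0 with h | h
  · exact h0.1 (by rw [copStrat_pos_zero, h])
  · have : cp 1 = rp 0 := by
      rw [copStrat_move_one]
      exact if_pos (Or.inr h)
    exact h0.2 this

/-- Lemma B : dominated start: the invariant. -/
lemma dominated_invariant (hs : T (rp 0) ∈ cN G z)
    (hdom : Dominates G (T (rp 0)) (rp 0)) (hRS : RS.Legal G) (n : ℕ)
    (hcl : ∀ k ≤ n, cp k ≠ rp k ∧ cp (k+1) ≠ rp k) :
    (∀ k ≤ n, rp k = rp 0) ∧ (∀ k ≤ n, 1 ≤ k → cp k = T (rp 0)) := by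
  induction n with
  | zero =>
    refine ⟨fun k hk => by rw [Nat.le_zero.1 hk], fun k hk h1 => by omega⟩
  | succ n ih =>
    have hcln : ∀ k ≤ n, cp k ≠ rp k ∧ cp (k+1) ≠ rp k :=
      fun k hk => hcl k (hk.trans (Nat.le_succ n))
    obtain ⟨hr, hc⟩ := ih hcln
    have hrn : rp n = rp 0 := hr n le_rfl
    -- the capture branch cannot fire
    have hcap : ¬ (rp n = cp n ∨ G.Adj (cp n) (rp n)) := by
      intro h
      have : cp (n+1) = rp n := by
        rcases Nat.eq_zero_or_pos n with rfl | hn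
        · rw [copStrat_move_one]
          exact if_pos h
        · rw [copStrat_move_succ G z T SX VV RS n hn]
          exact if_pos h
      exact (hcln n le_rfl).2 this
    have hc' : cp (n+1) = T (rp 0) := by
      rcases Nat.eq_zero_or_pos n with rfl | hn
      · rw [copStrat_move_one]
        rw [if_neg ?_]
        · exact grd_eq' G hs
        · exact hcap
      · rw [copStrat_move_succ G z T SX VV RS n hn, if_neg hcap, if_pos hrn,
          if_pos (by rw [hr (n-1) (by omega)]), hc n le_rfl hn]
    have hrsucc : rp (n+1) = rp 0 := by
      rcases robPos_legal CSz RS hRS n with h | h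
      · rw [h, hrn]
      · exfalso
        have hmem : rp (n+1) ∈ cN G (T (rp 0)) := by
          apply hdom
          rw [← hrn]; exact h
        rcases (mem_cN G).1 hmem with h' | h'
        · exact (hcl (n+1) le_rfl).1 (by rw [hc', h'])
        · have : cp (n+2) = rp (n+1) := by
            rw [copStrat_move_succ G z T SX VV RS (n+1) (by omega)]
            exact if_pos (Or.inr (by rw [hc']; exact h'))
          exact (hcl (n+1) le_rfl).2 this
    constructor
    · intro k hk
      rcases Nat.lt_or_ge k (n+1) with h | h
      · exact hr k (by omega)
      · have : k = n + 1 := by omega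
        rw [this]; exact hrsucc
    · intro k hk h1
      rcases Nat.lt_or_ge k (n+1) with h | h
      · exact hc k (by omega) h1
      · have : k = n + 1 := by omega
        rw [this]; exact hc'

/-- Lemma B conclusion: damage is contained in the robber's start vertex. -/
lemma damage_subset_of_dominated (hs : T (rp 0) ∈ cN G z)
    (hdom : Dominates G (T (rp 0)) (rp 0)) (hRS : RS.Legal G) :
    damageSet CSz RS ⊆ {rp 0} := by
  rintro v ⟨n, hv, hcl⟩
  have := (dominated_invariant hs hdom hRS n hcl).1 n le_rfl
  simp only [Set.mem_singleton_iff]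
  rw [← hv, this]


/-- If the cop does not capture at step `n+1`, the capture branch did not fire. -/
lemma nocap_branch {n : ℕ} (h2 : cp (n+1) ≠ rp n) :
    ¬ (rp n = cp n ∨ G.Adj (cp n) (rp n)) := by
  intro h
  apply h2
  rcases Nat.eq_zero_or_pos n with rfl | hn
  · rw [copStrat_move_one]; exact if_pos h
  · rw [copStrat_move_succ G z T SX VV RS n hn]; exact if_pos h

/-- If the robber ends round `n+1` next to (or on) the cop, a capture follows. -/
lemma forced_capture {n : ℕ} (h : rp (n+1) ∈ cN G (cp (n+1)))
    (h1 : cp (n+1) ≠ rp (n+1)) (h2 : cp (n+2) ≠ rp (n+1)) : False := by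
  rcases (mem_cN G).1 h with h' | h'
  · exact h1 h'.symm
  · apply h2
    rw [copStrat_move_succ G z T SX VV RS (n+1) (by omega)]
    exact if_pos (Or.inr h')

/-- Lemma C : the invariant for a `Cond3` start. -/
lemma cond3_invariant (hsw : T (rp 0) ∈ cN G z)
    (hXP : ∀ x, G.Adj (rp 0) x → x ∉ cN G (T (rp 0)) →
      SX (rp 0) x ∈ cN G (T (rp 0)) ∧ VV (rp 0) x ∈ cN G (SX (rp 0) x) ∧
      G.neighborSet x \ {rp 0} ⊆ cN G (SX (rp 0) x) ∧
      G.neighborSet (rp 0) \ {x} ⊆ cN G (VV (rp 0) x))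
    (hRS : RS.Legal G) (n : ℕ)
    (hcl : ∀ k ≤ n, cp k ≠ rp k ∧ cp (k+1) ≠ rp k) :
    ((∀ k ≤ n, rp k = rp 0) ∧ (∀ k ≤ n, 1 ≤ k → cp k = T (rp 0)))
    ∨ (∃ m, 1 ≤ m ∧ m ≤ n ∧ (∀ k < m, rp k = rp 0) ∧ G.Adj (rp 0) (rp m) ∧
        rp m ∉ cN G (T (rp 0)) ∧
        (∀ k ≤ n, m ≤ k → (rp k = rp m ∨ rp k = rp 0)) ∧
        (∀ k ≤ n, 1 ≤ k → k ≤ m → cp k = T (rp 0)) ∧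
        (∀ k ≤ n, m < k →
          cp k = if rp (k-1) = rp 0 then VV (rp 0) (rp m) else SX (rp 0) (rp m))) := by
  induction n with
  | zero =>
    left
    exact ⟨fun k hk => by rw [Nat.le_zero.1 hk], fun k hk h1 => by omega⟩
  | succ n ih =>
    have hcln : ∀ k ≤ n, cp k ≠ rp k ∧ cp (k+1) ≠ rp k :=
      fun k hk => hcl k (hk.trans (Nat.le_succ n))
    have hcap : ¬ (rp n = cp n ∨ G.Adj (cp n) (rp n)) :=
      nocap_branch (hcl n (Nat.le_succ n)).2
    rcases ih hcln with ⟨hr, hc⟩ | ⟨m, hm1, hmn, hpre, hadj, hnot, hset, hcsw, hcf⟩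
    · -- never deviated up to n
      have hrn : rp n = rp 0 := hr n le_rfl
      have hc' : cp (n+1) = T (rp 0) := by
        rcases Nat.eq_zero_or_pos n with rfl | hn
        · rw [copStrat_move_one,
            if_neg (show ¬(rp 0 = z ∨ G.Adj z (rp 0)) from hcap)]
          exact grd_eq' G hsw
        · rw [copStrat_move_succ G z T SX VV RS n hn, if_neg hcap, if_pos hrn,
            if_pos (by rw [hr (n-1) (by omega)]), hc n le_rfl hn]
      rcases robPos_legal CSz RS hRS n with h | h
      · -- robber passed: still home
        left
        constructor
        · intro k hk
          rcases Nat.lt_or_ge k (n+1) with hlt | hge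
          · exact hr k (by omega)
          · have : k = n+1 := by omega
            rw [this, h, hrn]
        · intro k hk h1
          rcases Nat.lt_or_ge k (n+1) with hlt | hge
          · exact hc k (by omega) h1
          · have : k = n+1 := by omega
            rw [this, hc']
      · -- robber deviated at round n+1
        rw [hrn] at h
        by_cases hmem : rp (n+1) ∈ cN G (T (rp 0))
        · exact absurd (forced_capture (by rw [hc']; exact hmem)
            (hcl (n+1) le_rfl).1 (hcl (n+1) le_rfl).2) (by simp)
        · right
          refine ⟨n+1, by omega, le_rfl, fun k hk => hr k (by omega), h, hmem,
            ?_, ?_, ?_⟩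
          · intro k hk hk2
            have : k = n+1 := by omega
            rw [this]; exact Or.inl rfl
          · intro k hk h1 hk2
            rcases Nat.lt_or_ge k (n+1) with hlt | hge
            · exact hc k (by omega) h1
            · have : k = n+1 := by omega
              rw [this, hc']
          · intro k hk h1
            omega
    · -- already deviated at m ≤ n
      have hX := hXP (rp m) hadj hnot
      have hxw : rp m ≠ rp 0 := (hadj.ne).symm
      have hmn1 : 1 ≤ n := le_trans hm1 hmn
      have hsx_vv : SX (rp 0) (rp m) ∈ cN G (VV (rp 0) (rp m)) := by
        rcases (mem_cN G).1 hX.2.1 with h' | h'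
        · rw [h']; exact (mem_cN G).2 (Or.inl rfl)
        · exact (mem_cN G).2 (Or.inr h'.symm)
      have hrn := hset n le_rfl hmn
      -- compute the cop's move
      have hc' : cp (n+1) = if rp n = rp 0 then VV (rp 0) (rp m) else SX (rp 0) (rp m) := by
        rw [copStrat_move_succ G z T SX VV RS n hmn1, if_neg hcap]
        rcases hrn with hx | hw
        · rw [if_neg (by rw [hx]; exact hxw), if_neg (by rw [hx]; exact hxw), hx]
          rcases Nat.lt_or_ge m n with hlt | hge
          · rw [hcf n le_rfl hlt]
            by_cases hprev : rp (n-1) = rp 0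
            · rw [if_pos hprev]
              exact grd_eq' G hsx_vv
            · rw [if_neg hprev]
              exact grd_eq G (Or.inl rfl)
          · rw [hcsw n le_rfl hmn1 (by omega)]
            exact grd_eq' G hX.1
        · have hmltn : m < n := by
            rcases Nat.lt_or_ge m n with hlt | hge
            · exact hlt
            · exfalso; have : n = m := by omega
              rw [this] at hw; exact hxw hw
          rw [if_pos hw, if_pos hw]
          by_cases hprev : rp (n-1) = rp 0
          · rw [if_pos hprev, hcf n le_rfl hmltn, if_pos hprev]
          · rw [if_neg hprev]
            have hprevx : rp (n-1) = rp m := by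
              rcases hset (n-1) (by omega) (by omega) with h' | h'
              · exact h'
              · exact absurd h' hprev
            rw [hprevx, hcf n le_rfl hmltn, if_neg hprev]
            exact grd_eq' G hX.2.1
      -- compute the robber's move
      have hr' : rp (n+1) = rp m ∨ rp (n+1) = rp 0 := by
        rcases robPos_legal CSz RS hRS n with h | h
        · rw [h]; exact hrn
        · rcases hrn with hx | hw
          · rw [hx] at h
            by_cases hρ : rp (n+1) = rp 0
            · exact Or.inr hρ
            · exfalso
              have hmem : rp (n+1) ∈ cN G (SX (rp 0) (rp m)) := by
                apply hX.2.2.1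
                exact ⟨h, hρ⟩
              refine forced_capture (n := n) ?_ (hcl (n+1) le_rfl).1 (hcl (n+1) le_rfl).2
              rw [hc', if_neg (by rw [hx]; exact hxw)]
              exact hmem
          · rw [hw] at h
            by_cases hρ : rp (n+1) = rp m
            · exact Or.inl hρ
            · exfalso
              have hmem : rp (n+1) ∈ cN G (VV (rp 0) (rp m)) := by
                apply hX.2.2.2
                exact ⟨h, hρ⟩
              refine forced_capture (n := n) ?_ (hcl (n+1) le_rfl).1 (hcl (n+1) le_rfl).2
              rw [hc', if_pos hw]
              exact hmem
      right
      refine ⟨m, hm1, by omega, hpre, hadj, hnot, ?_, ?_, ?_⟩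
      · intro k hk hk2
        rcases Nat.lt_or_ge k (n+1) with hlt | hge
        · exact hset k (by omega) hk2
        · have : k = n+1 := by omega
          rw [this]; exact hr'
      · intro k hk h1 hk2
        rcases Nat.lt_or_ge k (n+1) with hlt | hge
        · exact hcsw k (by omega) h1 hk2
        · omega
      · intro k hk h1
        rcases Nat.lt_or_ge k (n+1) with hlt | hge
        · exact hcf k (by omega) h1
        · have : k = n+1 := by omega
          rw [this]; simpa using hc'

/-- Lemma C conclusion: the damage is contained in a set of two vertices. -/
lemma damage_subset_of_cond3 (hsw : T (rp 0) ∈ cN G z)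
    (hXP : ∀ x, G.Adj (rp 0) x → x ∉ cN G (T (rp 0)) →
      SX (rp 0) x ∈ cN G (T (rp 0)) ∧ VV (rp 0) x ∈ cN G (SX (rp 0) x) ∧
      G.neighborSet x \ {rp 0} ⊆ cN G (SX (rp 0) x) ∧
      G.neighborSet (rp 0) \ {x} ⊆ cN G (VV (rp 0) x))
    (hRS : RS.Legal G) :
    ∃ X, damageSet CSz RS ⊆ {rp 0, X} := by
  classical
  refine ⟨if h : ∃ m, rp m ≠ rp 0 then rp (Nat.find h) else rp 0, ?_⟩
  rintro v ⟨n, hv, hcl⟩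
  rcases cond3_invariant hsw hXP hRS n hcl with ⟨hr, -⟩ |
    ⟨m, hm1, hmn, hpre, hadj, hnot, hset, -, -⟩
  · rw [← hv, hr n le_rfl]
    exact Set.mem_insert _ _
  · have hxw : rp m ≠ rp 0 := (hadj.ne).symm
    have hex : ∃ m', rp m' ≠ rp 0 := ⟨m, hxw⟩
    have hfind : Nat.find hex = m := by
      rw [Nat.find_eq_iff]
      exact ⟨hxw, fun k hk => by simp [hpre k hk]⟩
    rcases hset n le_rfl hmn with h | h
    · rw [← hv, h]
      refine Set.mem_insert_iff.2 (Or.inr ?_)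
      simp only [Set.mem_singleton_iff]
      rw [dif_pos hex, hfind]
    · rw [← hv, h]
      exact Set.mem_insert _ _

end Invariants

/-! ## robber strategies for the forward direction -/

/-- A robber who starts at `f c` (depending on the cop's start `c`) and never moves. -/
def passRS (v0 : V) (f : V → V) : RobberStrategy V :=
  ⟨f, fun _ rh => rh.head?.getD v0⟩

lemma passRS_legal (G : SimpleGraph V) (v0 : V) (f : V → V) : (passRS v0 f).Legal G := by
  intro r ch rh
  exact Or.inl rfl

lemma passRS_robPos (CS : CopStrategy V) (v0 : V) (f : V → V) (n : ℕ) :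
    robPos CS (passRS v0 f) n = f CS.init := by
  induction n with
  | zero => rfl
  | succ n ih =>
    rw [robPos_succ]
    show (robPos CS (passRS v0 f) n :: rHist CS (passRS v0 f) n).head?.getD v0 = _
    rw [List.head?_cons, Option.getD_some, ih]

/-- Against any legal cop strategy, a robber starting at distance `≥ 2` damages its
start vertex. -/
lemma damages_start_of_far (G : SimpleGraph V) (CS : CopStrategy V) (hCS : CS.Legal G)
    (v0 : V) (f : V → V) (h2 : 2 ≤ G.dist CS.init (f CS.init)) :
    f CS.init ∈ damageSet CS (passRS v0 f) := by
  have hne : CS.init ≠ f CS.init := by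
    intro h
    rw [← h] at h2
    simp [SimpleGraph.dist_self] at h2
  refine ⟨0, passRS_robPos CS v0 f 0, ?_⟩
  intro k hk
  have hk0 : k = 0 := Nat.le_zero.1 hk
  subst hk0
  rw [passRS_robPos]
  constructor
  · exact hne
  · intro h
    rcases copPos_legal CS (passRS v0 f) hCS 0 with h' | h'
    · rw [h'] at h
      exact hne h
    · have : G.dist CS.init (f CS.init) ≤ 1 := by
        rw [← h]
        exact (SimpleGraph.dist_le (SimpleGraph.Walk.cons h' SimpleGraph.Walk.nil))
      omega

/-- The definitive robber: start at `w`, move to `x`, then improvise. -/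
noncomputable def cheatRS (G : SimpleGraph V) (w x : V) : RobberStrategy V :=
  ⟨fun _ => w, fun ch rh =>
    if rh.length = 1 then grd G (rh.head?.getD w) x
    else if rh.length = 2 then
      (if h : ∃ x', (G.Adj x x' ∧ x' ≠ w) ∧ x' ∉ cN G (ch.head?.getD w) then
        grd G (rh.head?.getD w) h.choose
      else grd G (rh.head?.getD w) w)
    else if rh.length = 3 then
      (if rh.head?.getD w = w then
        (if h : ∃ w', (G.Adj w w' ∧ w' ≠ x) ∧ w' ∉ cN G (ch.head?.getD w) then
          grd G (rh.head?.getD w) h.choose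
        else rh.head?.getD w)
      else rh.head?.getD w)
    else rh.head?.getD w⟩

lemma cheatRS_legal (G : SimpleGraph V) (w x : V) : (cheatRS G w x).Legal G := by
  intro r ch rh
  have hrw : (cheatRS G w x).move ch (r :: rh) =
      (if (r :: rh).length = 1 then grd G ((r :: rh).head?.getD w) x
      else if (r :: rh).length = 2 then
        (if h : ∃ x', (G.Adj x x' ∧ x' ≠ w) ∧ x' ∉ cN G (ch.head?.getD w) then
          grd G ((r :: rh).head?.getD w) h.choose
        else grd G ((r :: rh).head?.getD w) w)
      else if (r :: rh).length = 3 then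
        (if (r :: rh).head?.getD w = w then
          (if h : ∃ w', (G.Adj w w' ∧ w' ≠ x) ∧ w' ∉ cN G (ch.head?.getD w) then
            grd G ((r :: rh).head?.getD w) h.choose
          else (r :: rh).head?.getD w)
        else (r :: rh).head?.getD w)
      else (r :: rh).head?.getD w) := rfl
  rw [hrw]
  split
  · exact grd_legal G r x
  split
  · split
    · exact grd_legal G r _
    · exact grd_legal G r w
  split
  · split
    · split
      · exact grd_legal G r _
      · exact Or.inl rfl
    · exact Or.inl rfl
  · exact Or.inl rfl

lemma ncard_ge_three [Fintype V] {s : Set V} {a b c : V} (hab : a ≠ b) (hac : a ≠ c)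
    (hbc : b ≠ c) (h : {a, b, c} ⊆ s) : 3 ≤ s.ncard := by
  have h3 : ({a, b, c} : Set V).ncard = 3 := by
    rw [Set.ncard_insert_of_notMem (by simp [hab, hac]) (Set.toFinite _),
      Set.ncard_pair hbc]
  rw [← h3]
  exact Set.ncard_le_ncard h (Set.toFinite s)

/-! ## the forward direction: failure of Cond3 gives three damaged vertices -/

lemma cheatRS_move_eval (G : SimpleGraph V) (w x : V) (ch rh : List V) :
    (cheatRS G w x).move ch rh =
    (if rh.length = 1 then grd G (rh.head?.getD w) x
    else if rh.length = 2 then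
      (if h : ∃ x', (G.Adj x x' ∧ x' ≠ w) ∧ x' ∉ cN G (ch.head?.getD w) then
        grd G (rh.head?.getD w) h.choose
      else grd G (rh.head?.getD w) w)
    else if rh.length = 3 then
      (if rh.head?.getD w = w then
        (if h : ∃ w', (G.Adj w w' ∧ w' ≠ x) ∧ w' ∉ cN G (ch.head?.getD w) then
          grd G (rh.head?.getD w) h.choose
        else rh.head?.getD w)
      else rh.head?.getD w)
    else rh.head?.getD w) := rfl

lemma exists_three_damage [Fintype V] {G : SimpleGraph V} (CS : CopStrategy V)
    (hCS : CS.Legal G) (w : V) (hw : w ∉ cN G CS.init)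
    (hnc : ¬ Cond3 G w (CS.move [CS.init] [w])) :
    ∃ RS : RobberStrategy V, RS.Legal G ∧ 3 ≤ (damageSet CS RS).ncard := by
  have hsw : CS.move [CS.init] [w] ∈ cN G CS.init := by
    rcases hCS CS.init [] [w] with h | h
    · exact (mem_cN G).2 (Or.inl h)
    · exact (mem_cN G).2 (Or.inr h)
  set z := CS.init with hzdef
  set sw := CS.move [z] [w] with hswdef
  rw [Cond3] at hnc
  push_neg at hnc
  obtain ⟨x, hx, H⟩ := hnc
  have hadjwx : G.Adj w x := hx.1
  have hxnsw : x ∉ cN G sw := hx.2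
  have hwz : w ≠ z := by
    intro h
    exact hw (h ▸ Set.mem_insert _ _)
  have hswne_w : sw ≠ w := by
    intro h
    exact hw (h ▸ hsw)
  have hxsw : x ≠ sw := by
    intro h
    exact hxnsw (h ▸ Set.mem_insert _ _)
  have hRSlegal : (cheatRS G w x).Legal G := cheatRS_legal G w x
  have hr0 : robPos CS (cheatRS G w x) 0 = w := rfl
  have hc0 : copPos CS (cheatRS G w x) 0 = z := rfl
  have hc1 : copPos CS (cheatRS G w x) 1 = sw := by
    rw [copPos_succ CS (cheatRS G w x) 0]
    rfl
  have hrh1 : robPos CS (cheatRS G w x) 0 :: rHist CS (cheatRS G w x) 0 = [w] := rfl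
  have hr1 : robPos CS (cheatRS G w x) 1 = x := by
    rw [robPos_succ CS (cheatRS G w x) 0, hrh1, cheatRS_move_eval,
      if_pos (show ([w] : List V).length = 1 by simp)]
    simp only [List.head?_cons, Option.getD_some]
    exact grd_eq G (Or.inr hadjwx)
  have hc2mem : copPos CS (cheatRS G w x) 2 ∈ cN G sw := by
    rcases copPos_legal CS (cheatRS G w x) hCS 1 with h | h
    · rw [hc1] at h
      exact (mem_cN G).2 (Or.inl h)
    · rw [hc1] at h
      exact (mem_cN G).2 (Or.inr h)
  have hs2x : copPos CS (cheatRS G w x) 2 ≠ x := by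
    intro h
    exact hxnsw (h ▸ hc2mem)
  have hrh2 : robPos CS (cheatRS G w x) 1 :: rHist CS (cheatRS G w x) 1 = [x, w] := by
    rw [← rHist_succ]
    have h2 : rHist CS (cheatRS G w x) 2 =
        [robPos CS (cheatRS G w x) 1, robPos CS (cheatRS G w x) 0] := by
      rw [rHist_succ, rHist_succ]
      rfl
    rw [h2, hr1, hr0]
  have hr2eq : robPos CS (cheatRS G w x) 2 = (if h : ∃ x', (G.Adj x x' ∧ x' ≠ w) ∧
      x' ∉ cN G (copPos CS (cheatRS G w x) 2) then grd G x h.choose else grd G x w) := by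
    rw [robPos_succ CS (cheatRS G w x) 1, hrh2, cheatRS_move_eval,
      if_neg (show ¬ ([x, w] : List V).length = 1 by simp),
      if_pos (show ([x, w] : List V).length = 2 by simp)]
    simp only [List.head?_cons, Option.getD_some]
    exact dite_congr rfl (fun _ => rfl) (fun _ => rfl)
  -- no-capture facts for rounds 0 and 1
  have nc00 : copPos CS (cheatRS G w x) 0 ≠ robPos CS (cheatRS G w x) 0 := by
    rw [hc0, hr0]; exact fun h => hwz h.symm
  have nc01 : copPos CS (cheatRS G w x) 1 ≠ robPos CS (cheatRS G w x) 0 := by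
    rw [hc1, hr0]; exact hswne_w
  have nc11 : copPos CS (cheatRS G w x) 1 ≠ robPos CS (cheatRS G w x) 1 := by
    rw [hc1, hr1]; exact fun h => hxsw h.symm
  have nc12 : copPos CS (cheatRS G w x) 2 ≠ robPos CS (cheatRS G w x) 1 := by
    rw [hr1]; exact hs2x
  have hdmgw : w ∈ damageSet CS (cheatRS G w x) := by
    refine ⟨0, hr0, ?_⟩
    intro k hk
    have hk0 : k = 0 := Nat.le_zero.1 hk
    subst hk0
    exact ⟨nc00, nc01⟩
  have hdmgx : x ∈ damageSet CS (cheatRS G w x) := by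
    refine ⟨1, hr1, ?_⟩
    intro k hk
    interval_cases k
    · exact ⟨nc00, nc01⟩
    · exact ⟨nc11, nc12⟩
  by_cases hA : ∃ x', (G.Adj x x' ∧ x' ≠ w) ∧ x' ∉ cN G (copPos CS (cheatRS G w x) 2)
  · -- the robber escapes to x'
    obtain ⟨⟨hadj', hne'⟩, hnotin'⟩ := hA.choose_spec
    have hr2 : robPos CS (cheatRS G w x) 2 = hA.choose := by
      have h1 : (if h : ∃ x', (G.Adj x x' ∧ x' ≠ w) ∧
          x' ∉ cN G (copPos CS (cheatRS G w x) 2) then grd G x h.choose else grd G x w)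
          = grd G x hA.choose := dif_pos hA
      exact hr2eq.trans (h1.trans (grd_eq G (Or.inr hadj')))
    have hc3mem : copPos CS (cheatRS G w x) 3 ∈ cN G (copPos CS (cheatRS G w x) 2) := by
      rcases copPos_legal CS (cheatRS G w x) hCS 2 with h | h
      · exact (mem_cN G).2 (Or.inl h)
      · exact (mem_cN G).2 (Or.inr h)
    have nc22 : copPos CS (cheatRS G w x) 2 ≠ robPos CS (cheatRS G w x) 2 := by
      intro h
      exact hnotin' ((congrArg (fun t => t ∈ cN G (copPos CS (cheatRS G w x) 2))
        (h.trans hr2)).mp (Set.mem_insert _ _))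
    have nc23 : copPos CS (cheatRS G w x) 3 ≠ robPos CS (cheatRS G w x) 2 := by
      intro h
      exact hnotin' ((congrArg (fun t => t ∈ cN G (copPos CS (cheatRS G w x) 2))
        (h.trans hr2)).mp hc3mem)
    have hdmgx' : hA.choose ∈ damageSet CS (cheatRS G w x) := by
      refine ⟨2, hr2, ?_⟩
      intro k hk
      interval_cases k
      · exact ⟨nc00, nc01⟩
      · exact ⟨nc11, nc12⟩
      · exact ⟨nc22, nc23⟩
    refine ⟨cheatRS G w x, hRSlegal, ncard_ge_three hadjwx.ne hne'.symm hadj'.ne ?_⟩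
    intro v hv
    rcases hv with rfl | rfl | rfl
    · exact hdmgw
    · exact hdmgx
    · exact hdmgx'
  · -- the robber returns to w and then escapes to w'
    push_neg at hA
    have hAsub : G.neighborSet x \ {w} ⊆ cN G (copPos CS (cheatRS G w x) 2) := by
      intro a ha
      rcases ha with ⟨ha1, ha2⟩
      exact hA a ⟨ha1, fun h => ha2 (Set.mem_singleton_iff.2 h)⟩
    have hwns2 : w ∉ cN G (copPos CS (cheatRS G w x) 2) := by
      intro hmem
      refine H (copPos CS (cheatRS G w x) 2) hc2mem w hmem hAsub ?_
      intro a ha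
      rcases ha with ⟨ha1, -⟩
      exact (mem_cN G).2 (Or.inr ha1)
    have hr2 : robPos CS (cheatRS G w x) 2 = w := by
      rw [hr2eq, dif_neg (by push_neg; exact hA)]
      exact grd_eq G (Or.inr hadjwx.symm)
    have hc3mem : copPos CS (cheatRS G w x) 3 ∈ cN G (copPos CS (cheatRS G w x) 2) := by
      rcases copPos_legal CS (cheatRS G w x) hCS 2 with h | h
      · exact (mem_cN G).2 (Or.inl h)
      · exact (mem_cN G).2 (Or.inr h)
    have hc3w : copPos CS (cheatRS G w x) 3 ≠ w := by
      intro h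
      exact hwns2 ((congrArg (fun t => t ∈ cN G (copPos CS (cheatRS G w x) 2)) h).mp hc3mem)
    have hB : ∃ w', (G.Adj w w' ∧ w' ≠ x) ∧ w' ∉ cN G (copPos CS (cheatRS G w x) 3) := by
      have hnB : ¬ (G.neighborSet w \ {x} ⊆ cN G (copPos CS (cheatRS G w x) 3)) :=
        H (copPos CS (cheatRS G w x) 2) hc2mem (copPos CS (cheatRS G w x) 3) hc3mem hAsub
      obtain ⟨a, ha, hna⟩ := Set.not_subset.1 hnB
      exact ⟨a, ⟨ha.1, fun h => ha.2 (Set.mem_singleton_iff.2 h)⟩, hna⟩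
    have hrh3 : robPos CS (cheatRS G w x) 2 :: rHist CS (cheatRS G w x) 2 = [w, x, w] := by
      rw [← rHist_succ]
      have h3 : rHist CS (cheatRS G w x) 3 = [robPos CS (cheatRS G w x) 2,
          robPos CS (cheatRS G w x) 1, robPos CS (cheatRS G w x) 0] := by
        rw [rHist_succ, rHist_succ, rHist_succ]
        rfl
      rw [h3, hr2, hr1, hr0]
    obtain ⟨⟨hadjww', hw'x⟩, hw'notin⟩ := hB.choose_spec
    have hr3 : robPos CS (cheatRS G w x) 3 = hB.choose := by
      rw [robPos_succ CS (cheatRS G w x) 2, hrh3, cheatRS_move_eval,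
        if_neg (show ¬ ([w, x, w] : List V).length = 1 by simp),
        if_neg (show ¬ ([w, x, w] : List V).length = 2 by simp),
        if_pos (show ([w, x, w] : List V).length = 3 by simp)]
      simp only [List.head?_cons, Option.getD_some]
      rw [if_pos trivial]
      exact (dif_pos hB).trans (grd_eq G (Or.inr hadjww'))
    have hc4mem : copPos CS (cheatRS G w x) 4 ∈ cN G (copPos CS (cheatRS G w x) 3) := by
      rcases copPos_legal CS (cheatRS G w x) hCS 3 with h | h
      · exact (mem_cN G).2 (Or.inl h)
      · exact (mem_cN G).2 (Or.inr h)
    have nc22 : copPos CS (cheatRS G w x) 2 ≠ robPos CS (cheatRS G w x) 2 := by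
      rw [hr2]
      intro h
      apply hwns2
      rw [h]
      exact Set.mem_insert _ _
    have nc23 : copPos CS (cheatRS G w x) 3 ≠ robPos CS (cheatRS G w x) 2 := by
      rw [hr2]; exact hc3w
    have nc33 : copPos CS (cheatRS G w x) 3 ≠ robPos CS (cheatRS G w x) 3 := by
      intro h
      exact hw'notin ((congrArg (fun t => t ∈ cN G (copPos CS (cheatRS G w x) 3))
        (h.trans hr3)).mp (Set.mem_insert _ _))
    have nc34 : copPos CS (cheatRS G w x) 4 ≠ robPos CS (cheatRS G w x) 3 := by
      intro h
      exact hw'notin ((congrArg (fun t => t ∈ cN G (copPos CS (cheatRS G w x) 3))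
        (h.trans hr3)).mp hc4mem)
    have hdmgw' : hB.choose ∈ damageSet CS (cheatRS G w x) := by
      refine ⟨3, hr3, ?_⟩
      intro k hk
      interval_cases k
      · exact ⟨nc00, nc01⟩
      · exact ⟨nc11, nc12⟩
      · exact ⟨nc22, nc23⟩
      · exact ⟨nc33, nc34⟩
    refine ⟨cheatRS G w x, hRSlegal, ncard_ge_three hadjwx.ne (fun h => hadjww'.ne h)
      (fun h => hw'x h.symm) ?_⟩
    intro v hv
    rcases hv with rfl | rfl | rfl
    · exact hdmgw
    · exact hdmgx
    · exact hdmgw'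

/-! ## distance lemmas -/

lemma dist_le_one_of_mem_cN {G : SimpleGraph V} {s t : V} (h : t ∈ cN G s) :
    G.dist s t ≤ 1 := by
  rcases (mem_cN G).1 h with h | h
  · rw [h, SimpleGraph.dist_self]
    omega
  · exact SimpleGraph.dist_le (SimpleGraph.Walk.cons h SimpleGraph.Walk.nil)

lemma exists_pred_on_geodesic {G : SimpleGraph V} (hG : G.Connected) {z u : V}
    (h : 1 ≤ G.dist z u) : ∃ x, G.Adj x u ∧ G.dist z x + 1 = G.dist z u := by
  obtain ⟨p, hp⟩ := hG.exists_walk_length_eq_dist z u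
  have hlen : 1 ≤ p.length := by omega
  cases hq : p.reverse with
  | nil =>
    exfalso
    have : p.reverse.length = 0 := by rw [hq]; rfl
    rw [SimpleGraph.Walk.length_reverse] at this
    omega
  | cons hadj q =>
    rename_i x
    have h1 : G.dist z x ≤ p.length - 1 := by
      have hql : q.length = p.reverse.length - 1 := by
        rw [hq]; rfl
      rw [SimpleGraph.Walk.length_reverse] at hql
      have hd := SimpleGraph.dist_le q.reverse
      rw [SimpleGraph.Walk.length_reverse, hql] at hd
      omega
    have h2 : G.dist z u ≤ G.dist z x + 1 := by
      calc G.dist z u ≤ G.dist z x + G.dist x u := hG.dist_triangle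
        _ ≤ G.dist z x + 1 := by
            have : G.dist x u ≤ 1 :=
              SimpleGraph.dist_le (SimpleGraph.Walk.cons hadj.symm SimpleGraph.Walk.nil)
            omega
    exact ⟨x, hadj.symm, by omega⟩

lemma exists_vertex_at_dist {G : SimpleGraph V} (hG : G.Connected) (z : V) :
    ∀ n u, G.dist z u = n → ∀ m ≤ n, ∃ v, G.dist z v = m := by
  intro n
  induction n with
  | zero =>
    intro u h m hm
    have : m = 0 := by omega
    subst this
    exact ⟨u, h⟩
  | succ n ih =>
    intro u h m hm
    rcases Nat.eq_or_lt_of_le hm with rfl | hlt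
    · exact ⟨u, h⟩
    · obtain ⟨x, hadj, hx⟩ := exists_pred_on_geodesic hG (by omega : 1 ≤ G.dist z u)
      exact ih x (by omega) m (by omega)

/-- If every vertex at distance 2 or 3 from `z` is dominated from `N[z]` or satisfies
`Cond3`, then `z` has eccentricity at most 3. -/
lemma ecc_le_three_of_conds {G : SimpleGraph V} (hG : G.Connected) (z : V)
    (HW : ∀ w, (G.dist z w = 2 ∨ G.dist z w = 3) →
      ((∃ s ∈ cN G z, Dominates G s w) ∨ ∃ sw ∈ cN G z, Cond3 G w sw)) :
    ∀ u, G.dist z u ≤ 3 := by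
  have hball : ∀ s t, s ∈ cN G z → t ∈ cN G s → G.dist z t ≤ 2 := by
    intro s t hs ht
    have h1 := dist_le_one_of_mem_cN hs
    have h2 := dist_le_one_of_mem_cN (G := G) ht
    have := hG.dist_triangle (u := z) (v := s) (w := t)
    omega
  by_contra hcon
  push_neg at hcon
  obtain ⟨u0, hu0⟩ := hcon
  obtain ⟨u, hu⟩ := exists_vertex_at_dist hG z (G.dist z u0) u0 rfl 4 (by omega)
  obtain ⟨x, hadjxu, hx⟩ := exists_pred_on_geodesic hG (by omega : 1 ≤ G.dist z u)
  rw [hu] at hx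
  have hx3 : G.dist z x = 3 := by omega
  obtain ⟨w, hadjwx, hwd⟩ := exists_pred_on_geodesic hG (by omega : 1 ≤ G.dist z x)
  rw [hx3] at hwd
  have hw2 : G.dist z w = 2 := by omega
  rcases HW w (Or.inl hw2) with ⟨s, hs, hdom⟩ | ⟨sw, hsw, hc3⟩
  · have : x ∈ cN G s := hdom hadjwx
    have := hball s x hs this
    omega
  · have hxnsw : x ∉ cN G sw := by
      intro hmem
      have := hball sw x hsw hmem
      omega
    obtain ⟨sx, hsx, v, hv, hA, hB⟩ := hc3 x ⟨hadjwx, hxnsw⟩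
    have huw : u ≠ w := by
      intro h
      rw [h, hw2] at hu
      omega
    have humem : u ∈ cN G sx := hA ⟨hadjxu, huw⟩
    have hd1 : G.dist z sx ≤ 2 := hball sw sx hsw hsx
    have hd2 := dist_le_one_of_mem_cN (G := G) humem
    have := hG.dist_triangle (u := z) (v := sx) (w := u)
    omega

/-! ## assembling the cop strategy from the characterization data -/

noncomputable def Tsel (G : SimpleGraph V) (z : V) : V → V := fun r0 =>
  if h1 : ∃ s ∈ cN G z, Dominates G s r0 then h1.choose
  else if h2 : ∃ s ∈ cN G z, Cond3 G r0 s then h2.choose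
  else z

noncomputable def SXsel (G : SimpleGraph V) (z : V) : V → V → V := fun r0 x =>
  if h : ∃ sx ∈ cN G (Tsel G z r0), ∃ v ∈ cN G sx,
      G.neighborSet x \ {r0} ⊆ cN G sx ∧ G.neighborSet r0 \ {x} ⊆ cN G v then h.choose
  else z

noncomputable def VVsel (G : SimpleGraph V) (z : V) : V → V → V := fun r0 x =>
  if h : ∃ sx ∈ cN G (Tsel G z r0), ∃ v ∈ cN G sx,
      G.neighborSet x \ {r0} ⊆ cN G sx ∧ G.neighborSet r0 \ {x} ⊆ cN G v then
    h.choose_spec.2.choose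
  else z

lemma sel_props {G : SimpleGraph V} {z r0 : V} (hC3 : Cond3 G r0 (Tsel G z r0)) :
    ∀ x, G.Adj r0 x → x ∉ cN G (Tsel G z r0) →
      SXsel G z r0 x ∈ cN G (Tsel G z r0) ∧ VVsel G z r0 x ∈ cN G (SXsel G z r0 x) ∧
      G.neighborSet x \ {r0} ⊆ cN G (SXsel G z r0 x) ∧
      G.neighborSet r0 \ {x} ⊆ cN G (VVsel G z r0 x) := by
  intro x hadj hnot
  have h : ∃ sx ∈ cN G (Tsel G z r0), ∃ v ∈ cN G sx,
      G.neighborSet x \ {r0} ⊆ cN G sx ∧ G.neighborSet r0 \ {x} ⊆ cN G v :=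
    hC3 x ⟨hadj, hnot⟩
  have hSX : SXsel G z r0 x = h.choose := by
    unfold SXsel
    rw [dif_pos h]
  have hVV : VVsel G z r0 x = h.choose_spec.2.choose := by
    unfold VVsel
    rw [dif_pos h]
  obtain ⟨hs1, hrest⟩ := h.choose_spec
  obtain ⟨hv1, hsub1, hsub2⟩ := hrest.choose_spec
  rw [hSX, hVV]
  exact ⟨hs1, hv1, hsub1, hsub2⟩

/-- The set of values appearing in the definition of `dmg`. -/
def dmgSet (G : SimpleGraph V) : Set ℕ :=
  { n | ∃ CS : CopStrategy V, CS.Legal G ∧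
    ∀ RS : RobberStrategy V, RS.Legal G → (damageSet CS RS).ncard ≤ n }

lemma dmg_eq_sInf (G : SimpleGraph V) : dmg G = sInf (dmgSet G) := rfl

lemma dmgSet_upward {G : SimpleGraph V} {m n : ℕ} (h : m ∈ dmgSet G) (hmn : m ≤ n) :
    n ∈ dmgSet G := by
  obtain ⟨CS, h1, h2⟩ := h
  exact ⟨CS, h1, fun RS hRS => le_trans (h2 RS hRS) hmn⟩

lemma dmgSet_nonempty [Fintype V] (G : SimpleGraph V) (hne : Nonempty V) :
    (dmgSet G).Nonempty := by
  obtain ⟨v0⟩ := hne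
  refine ⟨Fintype.card V, (⟨v0, fun ch _ => ch.head?.getD v0⟩ : CopStrategy V), ?_, ?_⟩
  · intro c ch rh
    exact Or.inl rfl
  · intro RS hRS
    have h1 : (damageSet (⟨v0, fun ch _ => ch.head?.getD v0⟩ : CopStrategy V) RS).ncard
        ≤ (Set.univ : Set V).ncard :=
      Set.ncard_le_ncard (Set.subset_univ _) Set.finite_univ
    rwa [Set.ncard_univ, Nat.card_eq_fintype_card] at h1

lemma zero_not_mem_dmgSet [Fintype V] {G : SimpleGraph V} (hG : G.Connected)
    (hrad : 2 ≤ gRadius G) : 0 ∉ dmgSet G := by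
  rintro ⟨CS, hCS, hbound⟩
  haveI : Nonempty V := hG.nonempty
  have hecc : 2 ≤ ecc G CS.init := le_trans hrad (Nat.sInf_le ⟨CS.init, rfl⟩)
  have hmem : ecc G CS.init ∈ Set.range (G.dist CS.init) := by
    apply Nat.sSup_mem
    · exact Set.range_nonempty _
    · exact (Set.finite_range _).bddAbove
  obtain ⟨u, hu⟩ := hmem
  have hdist : 2 ≤ G.dist CS.init u := by rw [hu]; exact hecc
  set f : V → V := fun c => if h : ∃ v, 2 ≤ G.dist c v then h.choose else c with hf
  have hfinit : 2 ≤ G.dist CS.init (f CS.init) := by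
    have hx : ∃ v, 2 ≤ G.dist CS.init v := ⟨u, hdist⟩
    rw [hf]
    simp only [dif_pos hx]
    exact hx.choose_spec
  have hd := damages_start_of_far G CS hCS CS.init f hfinit
  have h0 := hbound (passRS CS.init f) (passRS_legal G CS.init f)
  have hfin : (damageSet CS (passRS CS.init f)).Finite := Set.toFinite _
  rw [Nat.le_zero, Set.ncard_eq_zero hfin] at h0
  rw [h0] at hd
  exact hd

/-- Backward direction: the characterization data provides a cop strategy witnessing
damage at most `2`. -/
lemma backward_mem_two [Fintype V] {G : SimpleGraph V} (hG : G.Connected)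
    {z y sy : V} (hsy : sy ∈ cN G z) (hdy : G.dist z y = 2 ∨ G.dist z y = 3)
    (hnd : ¬ ∃ s ∈ cN G z, Dominates G s y) (hc3y : Cond3 G y sy)
    (hall : ∀ w : V, w ≠ y → (G.dist z w = 2 ∨ G.dist z w = 3) →
      (((¬ ∃ s ∈ cN G z, Dominates G s w) ∧ ∃ sw ∈ cN G z, Cond3 G w sw) ∨
        ∃ s ∈ cN G z, Dominates G s w)) :
    2 ∈ dmgSet G := by
  have HW : ∀ w, (G.dist z w = 2 ∨ G.dist z w = 3) →
      ((∃ s ∈ cN G z, Dominates G s w) ∨ ∃ sw ∈ cN G z, Cond3 G w sw) := by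
    intro w hw
    by_cases hwy : w = y
    · subst hwy
      exact Or.inr ⟨sy, hsy, hc3y⟩
    · rcases hall w hwy hw with ⟨-, h⟩ | h
      · exact Or.inr h
      · exact Or.inl h
  have hecc3 := ecc_le_three_of_conds hG z HW
  refine ⟨copStrat G z (Tsel G z) (SXsel G z) (VVsel G z),
    copStrat_legal G z _ _ _, ?_⟩
  intro RS hRS
  by_cases hin : robPos (copStrat G z (Tsel G z) (SXsel G z) (VVsel G z)) RS 0 ∈ cN G z
  · rw [damage_empty_of_start_close hin]
    simp
  · set r0 := robPos (copStrat G z (Tsel G z) (SXsel G z) (VVsel G z)) RS 0 with hr0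
    have hne : r0 ≠ z := by
      intro h
      exact hin (h ▸ Set.mem_insert _ _)
    have hnadj : ¬ G.Adj z r0 := by
      intro h
      exact hin ((mem_cN G).2 (Or.inr h))
    have hd2 : 2 ≤ G.dist z r0 := by
      have h0 : ¬ (G.dist z r0 = 0) := by
        intro heq
        exact hne (hG.dist_eq_zero_iff.1 heq).symm
      have h1 : ¬ (G.dist z r0 = 1) := by
        intro heq
        exact hnadj (SimpleGraph.dist_eq_one_iff_adj.1 heq)
      omega
    have hd23 : G.dist z r0 = 2 ∨ G.dist z r0 = 3 := by
      have := hecc3 r0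
      omega
    by_cases h1 : ∃ s ∈ cN G z, Dominates G s r0
    · -- dominated start
      have hTeq : Tsel G z r0 = h1.choose := by
        unfold Tsel
        rw [dif_pos h1]
      obtain ⟨hmem1, hdom1⟩ := h1.choose_spec
      have hsub := damage_subset_of_dominated (G := G) (z := z) (T := Tsel G z)
        (SX := SXsel G z) (VV := VVsel G z) (RS := RS)
        (by rw [← hr0, hTeq]; exact hmem1) (by rw [← hr0, hTeq]; exact hdom1) hRS
      calc (damageSet _ RS).ncard ≤ ({r0} : Set V).ncard :=
            Set.ncard_le_ncard hsub (Set.toFinite _)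
        _ ≤ 2 := by simp
    · -- Cond3 start
      have h2 : ∃ s ∈ cN G z, Cond3 G r0 s := by
        rcases HW r0 hd23 with h | h
        · exact absurd h h1
        · exact h
      have hTeq : Tsel G z r0 = h2.choose := by
        unfold Tsel
        rw [dif_neg h1, dif_pos h2]
      obtain ⟨hmem2, hc32⟩ := h2.choose_spec
      have hc3' : Cond3 G r0 (Tsel G z r0) := by
        rw [hTeq]
        exact hc32
      obtain ⟨X, hX⟩ := damage_subset_of_cond3 (G := G) (z := z) (T := Tsel G z)
        (SX := SXsel G z) (VV := VVsel G z) (RS := RS)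
        (by rw [← hr0, hTeq]; exact hmem2) (by rw [← hr0]; exact sel_props hc3') hRS
      calc (damageSet _ RS).ncard ≤ ({r0, X} : Set V).ncard :=
            Set.ncard_le_ncard hX (Set.toFinite _)
        _ ≤ 2 := by
            refine le_trans (Set.ncard_insert_le _ _) ?_
            simp

/-! ## the main theorem -/

lemma not_in_cN_of_dist {G : SimpleGraph V} {z w : V}
    (h : G.dist z w = 2 ∨ G.dist z w = 3) : w ∉ cN G z := by
  intro hm
  have := dist_le_one_of_mem_cN (G := G) hm
  omega

theorem dmg_eq_two_iff_aux {V : Type*} [Fintype V] (G : SimpleGraph V) (hG : G.Connected)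
    (hrad : gRadius G = 2 ∨ gRadius G = 3) (hd1 : dmg G ≠ 1) :
    dmg G = 2 ↔ ∃ z y sy : V, sy ∈ cN G z ∧
      (G.dist z y = 2 ∨ G.dist z y = 3) ∧
      (¬ ∃ s ∈ cN G z, Dominates G s y) ∧
      Cond3 G y sy ∧
      ∀ w : V, w ≠ y → (G.dist z w = 2 ∨ G.dist z w = 3) →
        (((¬ ∃ s ∈ cN G z, Dominates G s w) ∧ ∃ sw ∈ cN G z, Cond3 G w sw) ∨
          ∃ s ∈ cN G z, Dominates G s w) := by
  haveI : Nonempty V := hG.nonempty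
  have hrad2 : 2 ≤ gRadius G := by rcases hrad with h | h <;> omega
  constructor
  · -- forward direction
    intro h2
    have h2mem : 2 ∈ dmgSet G := by
      have hmem := Nat.sInf_mem (dmgSet_nonempty G ‹Nonempty V›)
      rw [← dmg_eq_sInf, h2] at hmem
      exact hmem
    obtain ⟨CS, hCS, hbound⟩ := h2mem
    set z := CS.init with hz
    have hEy : ∃ y, (G.dist z y = 2 ∨ G.dist z y = 3) ∧
        ¬ ∃ s ∈ cN G z, Dominates G s y := by
      by_contra hny
      push_neg at hny
      have HW : ∀ w, (G.dist z w = 2 ∨ G.dist z w = 3) →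
          ((∃ s ∈ cN G z, Dominates G s w) ∨ ∃ sw ∈ cN G z, Cond3 G w sw) :=
        fun w hw => Or.inl (hny w hw)
      have hecc3 := ecc_le_three_of_conds hG z HW
      have h1mem : 1 ∈ dmgSet G := by
        refine ⟨copStrat G z (Tsel G z) (SXsel G z) (VVsel G z),
          copStrat_legal G z _ _ _, ?_⟩
        intro RS hRS
        by_cases hin : robPos (copStrat G z (Tsel G z) (SXsel G z) (VVsel G z)) RS 0 ∈ cN G z
        · rw [damage_empty_of_start_close hin]
          simp
        · set r0 := robPos (copStrat G z (Tsel G z) (SXsel G z) (VVsel G z)) RS 0 with hr0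
          have hne : r0 ≠ z := by
            intro h
            exact hin (h ▸ Set.mem_insert _ _)
          have hnadj : ¬ G.Adj z r0 := by
            intro h
            exact hin ((mem_cN G).2 (Or.inr h))
          have hd2 : 2 ≤ G.dist z r0 := by
            have h0 : ¬ (G.dist z r0 = 0) := by
              intro heq
              exact hne (hG.dist_eq_zero_iff.1 heq).symm
            have h1 : ¬ (G.dist z r0 = 1) := by
              intro heq
              exact hnadj (SimpleGraph.dist_eq_one_iff_adj.1 heq)
            omega
          have hd23 : G.dist z r0 = 2 ∨ G.dist z r0 = 3 := by
            have := hecc3 r0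
            omega
          have h1 : ∃ s ∈ cN G z, Dominates G s r0 := hny r0 hd23
          have hTeq : Tsel G z r0 = h1.choose := by
            unfold Tsel
            rw [dif_pos h1]
          obtain ⟨hmem1, hdom1⟩ := h1.choose_spec
          have hsub := damage_subset_of_dominated (G := G) (z := z) (T := Tsel G z)
            (SX := SXsel G z) (VV := VVsel G z) (RS := RS)
            (by rw [← hr0, hTeq]; exact hmem1) (by rw [← hr0, hTeq]; exact hdom1) hRS
          calc (damageSet _ RS).ncard ≤ ({r0} : Set V).ncard :=
                Set.ncard_le_ncard hsub (Set.toFinite _)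
            _ ≤ 1 := by simp
      have hle1 : dmg G ≤ 1 := by
        rw [dmg_eq_sInf]
        exact Nat.sInf_le h1mem
      omega
    obtain ⟨y, hdy, hndy⟩ := hEy
    have hsy : CS.move [z] [y] ∈ cN G z := by
      rcases hCS z [] [y] with h | h
      · exact (mem_cN G).2 (Or.inl h)
      · exact (mem_cN G).2 (Or.inr h)
    have hc3y : Cond3 G y (CS.move [z] [y]) := by
      by_contra hnc
      obtain ⟨RS, hRSl, h3⟩ := exists_three_damage CS hCS y (not_in_cN_of_dist hdy) hnc
      have := hbound RS hRSl
      omega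
    refine ⟨z, y, CS.move [z] [y], hsy, hdy, hndy, hc3y, ?_⟩
    intro w hwy hdw
    by_cases hdom : ∃ s ∈ cN G z, Dominates G s w
    · exact Or.inr hdom
    · left
      refine ⟨hdom, CS.move [z] [w], ?_, ?_⟩
      · rcases hCS z [] [w] with h | h
        · exact (mem_cN G).2 (Or.inl h)
        · exact (mem_cN G).2 (Or.inr h)
      · by_contra hnc
        obtain ⟨RS, hRSl, h3⟩ := exists_three_damage CS hCS w (not_in_cN_of_dist hdw) hnc
        have := hbound RS hRSl
        omega
  · -- backward direction
    rintro ⟨z, y, sy, hsy, hdy, hnd, hc3y, hall⟩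
    have h2mem : 2 ∈ dmgSet G := backward_mem_two hG hsy hdy hnd hc3y hall
    have hle : dmg G ≤ 2 := by
      rw [dmg_eq_sInf]
      exact Nat.sInf_le h2mem
    have hge : 2 ≤ dmg G := by
      by_contra hlt
      push_neg at hlt
      have hd0 : dmg G = 0 := by omega
      have hmem := Nat.sInf_mem (dmgSet_nonempty G ‹Nonempty V›)
      rw [← dmg_eq_sInf, hd0] at hmem
      exact zero_not_mem_dmgSet hG hrad2 hmem
    omega

end DamageAux

/-- Characterization of graphs with damage number two among finite connected graphs of
radius `2` or `3` whose damage number is not `1`. -/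
theorem dmg_eq_two_iff {V : Type*} [Fintype V] (G : SimpleGraph V) (hG : G.Connected)
    (hrad : gRadius G = 2 ∨ gRadius G = 3) (hd1 : dmg G ≠ 1) :
    dmg G = 2 ↔ ∃ z y sy : V, sy ∈ cN G z ∧
      (G.dist z y = 2 ∨ G.dist z y = 3) ∧
      (¬ ∃ s ∈ cN G z, Dominates G s y) ∧
      Cond3 G y sy ∧
      ∀ w : V, w ≠ y → (G.dist z w = 2 ∨ G.dist z w = 3) →
        (((¬ ∃ s ∈ cN G z, Dominates G s w) ∧ ∃ sw ∈ cN G z, Cond3 G w sw) ∨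
          ∃ s ∈ cN G z, Dominates G s w) :=
  dmg_eq_two_iff_aux G hG hrad hd1
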